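/- Let ρ : Matrix (Fin n) (Fin n) ℂ be a positive definite density matrix (positive definite with trace 1), and let A₁, …, A_m : Matrix (Fin n) (Fin n) ℂ satisfy ∑ᵢ Aᵢᴴ·Aᵢ = 1 and ∑ᵢ Aᵢ·Aᵢᴴ = 1. If S(∑ᵢ Aᵢ·ρ·Aᵢᴴ) = S(ρ), where S is the von Neumann entropy, then there exists a unitary matrix U : Matrix (Fin n) (Fin n) ℂ such that ∑ᵢ Aᵢ·ρ·Aᵢᴴ = U·ρ·Uᴴ. -/

import Mathlib

open Matrix ComplexOrder

private lemma exists_perm_comp_eq' {n : ℕ} (p q : Fin n → ℝ)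
    (h : ∀ a : ℝ, (Finset.univ.filter fun k => a = q k).card
      = (Finset.univ.filter fun j => a = p j).card) :
    ∃ e : Equiv.Perm (Fin n), ∀ k, p (e k) = q k := by
  classical
  have key : ∀ f : Fin n → ℝ, ((List.ofFn f : List ℝ) : Multiset ℝ)
      = Multiset.map f Finset.univ.val := by
    intro f
    rw [List.ofFn_eq_map]
    rfl
  have hperm : (List.ofFn p).Perm (List.ofFn q) := by
    rw [← Multiset.coe_eq_coe, key, key]
    ext a
    rw [Multiset.count_map, Multiset.count_map]
    exact (h a).symm
  have hmono1 := Tuple.monotone_sort p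
  have hmono2 := Tuple.monotone_sort q
  have heq : p ∘ Tuple.sort p = q ∘ Tuple.sort q := by
    apply List.ofFn_injective
    refine List.Perm.eq_of_sortedLE hmono1.sortedLE_ofFn hmono2.sortedLE_ofFn ?_
    exact ((Tuple.sort p).ofFn_comp_perm p).trans
      (hperm.trans ((Tuple.sort q).ofFn_comp_perm q).symm)
  refine ⟨(Tuple.sort q).symm.trans (Tuple.sort p), fun k => ?_⟩
  have h2 := congrFun heq ((Tuple.sort q).symm k)
  simpa using h2

private lemma perm_toMatrix_conjTranspose' {n : ℕ} (e : Equiv.Perm (Fin n)) :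
    (e.toPEquiv.toMatrix : Matrix (Fin n) (Fin n) ℂ)ᴴ = e.symm.toPEquiv.toMatrix := by
  ext i j
  have h : (e j = i) ↔ (e.symm i = j) := eq_comm.trans (e.symm_apply_eq).symm
  simp [conjTranspose_apply, PEquiv.toMatrix_apply, Equiv.toPEquiv_apply,
    apply_ite (star : ℂ → ℂ)]
  rw [if_congr h rfl rfl]

private lemma perm_conj_diag' {n : ℕ} (e : Equiv.Perm (Fin n)) (d : Fin n → ℂ) :
    ∃ E : Matrix (Fin n) (Fin n) ℂ, Eᴴ * E = 1 ∧
      E * Matrix.diagonal d * Eᴴ = Matrix.diagonal (fun k => d (e k)) := by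
  classical
  refine ⟨e.toPEquiv.toMatrix, ?_, ?_⟩
  · rw [perm_toMatrix_conjTranspose', ← PEquiv.toMatrix_trans, ← Equiv.toPEquiv_trans]
    simp [PEquiv.toMatrix_refl]
  · rw [perm_toMatrix_conjTranspose', PEquiv.toMatrix_toPEquiv_mul,
      PEquiv.mul_toMatrix_toPEquiv, Equiv.symm_symm, Matrix.submatrix_submatrix]
    ext i j
    by_cases h : i = j
    · simp [h, Matrix.submatrix_apply, Matrix.diagonal_apply]
    · simp [Matrix.submatrix_apply, Matrix.diagonal_apply, h, e.injective.ne h]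

private lemma entry_conj_diag {N : ℕ} (C : Matrix (Fin N) (Fin N) ℂ) (d : Fin N → ℂ)
    (k k' : Fin N) :
    (C * Matrix.diagonal d * Cᴴ) k k' = ∑ j, C k j * d j * star (C k' j) := by
  rw [Matrix.mul_apply]
  simp only [Matrix.mul_diagonal, conjTranspose_apply]


/-- The von Neumann entropy of a (Hermitian) matrix: `S(M) = ∑ᵢ φ(λᵢ(M))`,
where `φ(x) = -x·log x` and the `λᵢ(M)` are the eigenvalues of `M` (with
multiplicity). Junk value `0` for non-Hermitian matrices. -/
noncomputable def vnEntropy {d : ℕ} (M : Matrix (Fin d) (Fin d) ℂ) : ℝ :=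
  haveI := Classical.dec M.IsHermitian; if h : M.IsHermitian then ∑ i, Real.negMulLog (h.eigenvalues i) else 0

/-- If `ρ` is a positive definite density matrix,
`∑ᵢ Aᵢᴴ Aᵢ = 1 = ∑ᵢ Aᵢ Aᵢᴴ` (a bi-stochastic family of Kraus operators), and
the von Neumann entropy satisfies `S(∑ᵢ Aᵢ ρ Aᵢᴴ) = S(ρ)`, then
`∑ᵢ Aᵢ ρ Aᵢᴴ = U ρ Uᴴ` for some unitary `U`. -/
theorem bistochastic_entropy_preserving_on_state_is_unitary {n m : ℕ}
    (ρ : Matrix (Fin n) (Fin n) ℂ) (hρ : ρ.PosDef) (htr : ρ.trace = 1)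
    (A : Fin m → Matrix (Fin n) (Fin n) ℂ)
    (hA1 : ∑ i, (A i)ᴴ * A i = 1) (hA2 : ∑ i, A i * (A i)ᴴ = 1)
    (hS : vnEntropy (∑ i, A i * ρ * (A i)ᴴ) = vnEntropy ρ) :
    ∃ U : Matrix (Fin n) (Fin n) ℂ, Uᴴ * U = 1 ∧
      ∑ i, A i * ρ * (A i)ᴴ = U * ρ * Uᴴ := by
  classical
  set σ : Matrix (Fin n) (Fin n) ℂ := ∑ i, A i * ρ * (A i)ᴴ with hσdef
  have hρH : ρ.IsHermitian := hρ.1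
  have hσH : σ.IsHermitian := by
    show σᴴ = σ
    rw [hσdef, conjTranspose_sum]
    refine Finset.sum_congr rfl fun i _ => ?_
    simp [Matrix.conjTranspose_mul, Matrix.mul_assoc, hρH.eq]
  set p : Fin n → ℝ := hρH.eigenvalues with hp
  set q : Fin n → ℝ := hσH.eigenvalues with hq
  set Vm : Matrix (Fin n) (Fin n) ℂ := (hσH.eigenvectorUnitary : Matrix (Fin n) (Fin n) ℂ) with hVm
  set Wm : Matrix (Fin n) (Fin n) ℂ := (hρH.eigenvectorUnitary : Matrix (Fin n) (Fin n) ℂ) with hWm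
  have hV1 : Vmᴴ * Vm = 1 := by
    rw [← Matrix.star_eq_conjTranspose]
    exact mem_unitaryGroup_iff'.mp hσH.eigenvectorUnitary.2
  have hV2 : Vm * Vmᴴ = 1 := by
    rw [← Matrix.star_eq_conjTranspose]
    exact mem_unitaryGroup_iff.mp hσH.eigenvectorUnitary.2
  have hW1 : Wmᴴ * Wm = 1 := by
    rw [← Matrix.star_eq_conjTranspose]
    exact mem_unitaryGroup_iff'.mp hρH.eigenvectorUnitary.2
  have hW2 : Wm * Wmᴴ = 1 := by
    rw [← Matrix.star_eq_conjTranspose]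
    exact mem_unitaryGroup_iff.mp hρH.eigenvectorUnitary.2
  have hDρ : Wmᴴ * ρ * Wm = diagonal (fun j => (p j : ℂ)) := by
    rw [← Matrix.star_eq_conjTranspose]
    have h := hρH.conjStarAlgAut_star_eigenvectorUnitary
    rw [Unitary.conjStarAlgAut_star_apply] at h
    exact h
  have hDσ : Vmᴴ * σ * Vm = diagonal (fun k => (q k : ℂ)) := by
    rw [← Matrix.star_eq_conjTranspose]
    have h := hσH.conjStarAlgAut_star_eigenvectorUnitary
    rw [Unitary.conjStarAlgAut_star_apply] at h
    exact h
  have hρdecomp : ρ = Wm * diagonal (fun j => (p j : ℂ)) * Wmᴴ := by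
    rw [← hDρ]
    calc ρ = (Wm * Wmᴴ) * ρ * (Wm * Wmᴴ) := by rw [hW2, Matrix.one_mul, Matrix.mul_one]
      _ = Wm * (Wmᴴ * ρ * Wm) * Wmᴴ := by simp only [Matrix.mul_assoc]
  have hσdecomp : σ = Vm * diagonal (fun k => (q k : ℂ)) * Vmᴴ := by
    rw [← hDσ]
    calc σ = (Vm * Vmᴴ) * σ * (Vm * Vmᴴ) := by rw [hV2, Matrix.one_mul, Matrix.mul_one]
      _ = Vm * (Vmᴴ * σ * Vm) * Vmᴴ := by simp only [Matrix.mul_assoc]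
  set B : Fin m → Matrix (Fin n) (Fin n) ℂ := fun i => Vmᴴ * A i * Wm with hB
  set M : Fin n → Fin n → ℝ := fun k j => ∑ i, Complex.normSq (B i k j) with hM
  have hMnn : ∀ k j, 0 ≤ M k j := fun k j =>
    Finset.sum_nonneg fun i _ => Complex.normSq_nonneg _
  have collapseW : ∀ X : Matrix (Fin n) (Fin n) ℂ, Wm * (Wmᴴ * X) = X := fun X => by
    rw [← Matrix.mul_assoc, hW2, Matrix.one_mul]
  have collapseV : ∀ X : Matrix (Fin n) (Fin n) ℂ, Vm * (Vmᴴ * X) = X := fun X => by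
    rw [← Matrix.mul_assoc, hV2, Matrix.one_mul]
  have hBH : ∀ i, (B i)ᴴ = Wmᴴ * ((A i)ᴴ * Vm) := fun i => by
    simp only [hB, conjTranspose_mul, conjTranspose_conjTranspose, Matrix.mul_assoc]
  -- key identity
  have hkey : ∑ i, B i * diagonal (fun j => (p j : ℂ)) * (B i)ᴴ
      = diagonal (fun k => (q k : ℂ)) := by
    have step : ∀ i, B i * diagonal (fun j => (p j : ℂ)) * (B i)ᴴ
        = Vmᴴ * ((A i * ρ * (A i)ᴴ) * Vm) := by
      intro i
      rw [← hDρ, hBH]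
      simp only [hB, Matrix.mul_assoc, collapseW]
    rw [Finset.sum_congr rfl fun i _ => step i, ← Finset.mul_sum, ← Finset.sum_mul, ← hσdef,
      ← Matrix.mul_assoc, hDσ]
  have hrowM : ∑ i, B i * (B i)ᴴ = 1 := by
    have step : ∀ i, B i * (B i)ᴴ = Vmᴴ * ((A i * (A i)ᴴ) * Vm) := by
      intro i
      rw [hBH]
      simp only [hB, Matrix.mul_assoc, collapseW]
    rw [Finset.sum_congr rfl fun i _ => step i, ← Finset.mul_sum, ← Finset.sum_mul, hA2,
      Matrix.one_mul, hV1]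
  have hcolM : ∑ i, (B i)ᴴ * B i = 1 := by
    have step : ∀ i, (B i)ᴴ * B i = Wmᴴ * (((A i)ᴴ * A i) * Wm) := by
      intro i
      rw [hBH]
      simp only [hB, Matrix.mul_assoc, collapseV]
    rw [Finset.sum_congr rfl fun i _ => step i, ← Finset.mul_sum, ← Finset.sum_mul, hA1,
      Matrix.one_mul, hW1]
  -- scalar versions
  have hterm : ∀ (z : ℂ) (c : ℝ), z * (c : ℂ) * star z = ((c * Complex.normSq z : ℝ) : ℂ) := by
    intro z c
    rw [Complex.star_def, mul_comm z (c : ℂ), mul_assoc, Complex.mul_conj]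
    push_cast
    ring
  have hqk : ∀ k, q k = ∑ j, M k j * p j := by
    intro k
    have h : (∑ i, B i * diagonal (fun j => (p j : ℂ)) * (B i)ᴴ) k k
        = diagonal (fun k => (q k : ℂ)) k k := by rw [hkey]
    rw [Matrix.sum_apply, diagonal_apply_eq] at h
    simp only [entry_conj_diag, hterm] at h
    have hreal : ∑ i, ∑ j, p j * Complex.normSq (B i k j) = q k := by exact_mod_cast h
    calc q k = ∑ i, ∑ j, p j * Complex.normSq (B i k j) := hreal.symm
      _ = ∑ j, ∑ i, p j * Complex.normSq (B i k j) := Finset.sum_comm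
      _ = ∑ j, M k j * p j := by
          refine Finset.sum_congr rfl fun j _ => ?_
          rw [hM, ← Finset.mul_sum, mul_comm]
  have hrow : ∀ k, ∑ j, M k j = 1 := by
    intro k
    have h : (∑ i, B i * (B i)ᴴ) k k = (1 : Matrix (Fin n) (Fin n) ℂ) k k := by rw [hrowM]
    rw [Matrix.sum_apply, Matrix.one_apply_eq] at h
    simp only [Matrix.mul_apply, conjTranspose_apply, Complex.star_def, Complex.mul_conj] at h
    have hreal : ∑ i, ∑ j, Complex.normSq (B i k j) = 1 := by exact_mod_cast h
    rw [← hreal, Finset.sum_comm]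
  have hcol : ∀ j, ∑ k, M k j = 1 := by
    intro j
    have h : (∑ i, (B i)ᴴ * B i) j j = (1 : Matrix (Fin n) (Fin n) ℂ) j j := by rw [hcolM]
    rw [Matrix.sum_apply, Matrix.one_apply_eq] at h
    simp only [Matrix.mul_apply, conjTranspose_apply] at h
    have h2 : ∀ (i : Fin m) (k : Fin n), star (B i k j) * B i k j
        = ((Complex.normSq (B i k j) : ℝ) : ℂ) := fun i k => by
      rw [mul_comm, Complex.star_def, Complex.mul_conj]
    simp only [h2] at h
    have hreal : ∑ i, ∑ k, Complex.normSq (B i k j) = 1 := by exact_mod_cast h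
    rw [← hreal, Finset.sum_comm]
  -- entropy analysis
  have hppos : ∀ j, 0 < p j := fun j => hρ.eigenvalues_pos j
  have hS' : ∑ k, Real.negMulLog (q k) = ∑ j, Real.negMulLog (p j) := by
    simp only [vnEntropy] at hS
    rw [dif_pos hσH, dif_pos hρH] at hS
    exact hS
  have hle : ∀ k ∈ Finset.univ, (∑ j, M k j * Real.negMulLog (p j)) ≤ Real.negMulLog (q k) := by
    intro k _
    have h := Real.concaveOn_negMulLog.le_map_sum (t := Finset.univ) (w := M k) (p := p)
      (fun j _ => hMnn k j) (hrow k) (fun j _ => Set.mem_Ici.mpr (hppos j).le)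
    simp only [smul_eq_mul] at h
    rw [← hqk k] at h
    exact h
  have hLsum : ∑ k, ∑ j, M k j * Real.negMulLog (p j) = ∑ j, Real.negMulLog (p j) := by
    rw [Finset.sum_comm]
    refine Finset.sum_congr rfl fun j _ => ?_
    rw [← Finset.sum_mul, hcol j, one_mul]
  have htotal : ∑ k, (∑ j, M k j * Real.negMulLog (p j)) = ∑ k, Real.negMulLog (q k) := by
    rw [hLsum, hS']
  have hk_eq : ∀ k ∈ Finset.univ, (∑ j, M k j * Real.negMulLog (p j)) = Real.negMulLog (q k) :=
    (Finset.sum_eq_sum_iff_of_le hle).mp htotal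
  have hpq : ∀ k j, M k j ≠ 0 → p j = q k := by
    intro k j hMkj
    have hiff := Real.strictConcaveOn_negMulLog.map_sum_eq_iff' (t := Finset.univ)
      (w := M k) (p := p) (fun j _ => hMnn k j) (hrow k)
      (fun j _ => Set.mem_Ici.mpr (hppos j).le)
    have heq2 : Real.negMulLog (∑ i, M k i • p i) = ∑ i, M k i • Real.negMulLog (p i) := by
      simp only [smul_eq_mul]
      rw [← hqk k]
      exact (hk_eq k (Finset.mem_univ k)).symm
    have h3 := (hiff.mp heq2) j (Finset.mem_univ j) hMkj
    rw [h3]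
    simp only [smul_eq_mul]
    rw [← hqk k]
  -- counting
  have hcount : ∀ a : ℝ, (Finset.univ.filter fun k => a = q k).card
      = (Finset.univ.filter fun j => a = p j).card := by
    intro a
    set K := Finset.univ.filter fun k => a = q k with hK
    set J := Finset.univ.filter fun j => a = p j with hJ
    have hKval : (K.card : ℝ) = ∑ k ∈ K, ∑ j ∈ J, M k j := by
      have h1 : ∀ k ∈ K, ∑ j ∈ J, M k j = 1 := by
        intro k hk
        rw [Finset.sum_subset (Finset.subset_univ J) ?_]
        · exact hrow k
        · intro j _ hj
          by_contra hM0
          refine hj ?_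
          rw [hJ, Finset.mem_filter]
          refine ⟨Finset.mem_univ j, ?_⟩
          rw [hpq k j hM0]
          exact (Finset.mem_filter.mp hk).2
      rw [Finset.sum_congr rfl h1]
      simp
    have hJval : (J.card : ℝ) = ∑ j ∈ J, ∑ k ∈ K, M k j := by
      have h1 : ∀ j ∈ J, ∑ k ∈ K, M k j = 1 := by
        intro j hj
        rw [Finset.sum_subset (Finset.subset_univ K) ?_]
        · exact hcol j
        · intro k _ hk
          by_contra hM0
          refine hk ?_
          rw [hK, Finset.mem_filter]
          refine ⟨Finset.mem_univ k, ?_⟩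
          rw [← hpq k j hM0]
          exact (Finset.mem_filter.mp hj).2
      rw [Finset.sum_congr rfl h1]
      simp
    have : (K.card : ℝ) = (J.card : ℝ) := by
      rw [hKval, hJval, Finset.sum_comm]
    exact_mod_cast this
  obtain ⟨e, he⟩ := exists_perm_comp_eq' p q hcount
  obtain ⟨E, hE1, hEdiag⟩ := perm_conj_diag' e (fun j => (p j : ℂ))
  have hEdiag' : E * diagonal (fun j => (p j : ℂ)) * Eᴴ = diagonal (fun k => (q k : ℂ)) := by
    rw [hEdiag]
    simp only [he]
  have collapseW' : ∀ X : Matrix (Fin n) (Fin n) ℂ, Wmᴴ * (Wm * X) = X := fun X => by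
    rw [← Matrix.mul_assoc, hW1, Matrix.one_mul]
  refine ⟨Vm * E * Wmᴴ, ?_, ?_⟩
  · calc (Vm * E * Wmᴴ)ᴴ * (Vm * E * Wmᴴ)
        = Wm * (Eᴴ * (Vmᴴ * (Vm * (E * Wmᴴ)))) := by
          simp only [conjTranspose_mul, conjTranspose_conjTranspose, Matrix.mul_assoc]
      _ = 1 := by
          rw [← Matrix.mul_assoc Vmᴴ Vm, hV1, Matrix.one_mul, ← Matrix.mul_assoc Eᴴ E, hE1,
            Matrix.one_mul, hW2]
  · calc σ = Vm * ((E * diagonal (fun j => (p j : ℂ)) * Eᴴ) * Vmᴴ) := by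
          rw [hEdiag', hσdecomp, Matrix.mul_assoc]
      _ = Vm * (E * (diagonal (fun j => (p j : ℂ)) * (Eᴴ * Vmᴴ))) := by
          simp only [Matrix.mul_assoc]
      _ = (Vm * E * Wmᴴ) * ρ * (Vm * E * Wmᴴ)ᴴ := by
          rw [hρdecomp]
          simp only [conjTranspose_mul, conjTranspose_conjTranspose, Matrix.mul_assoc, collapseW']
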